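/- arXiv:1501.04237 — 2 statements merged into one kernel-verified Lean document; each statement's English description precedes it below -/
import Mathlib

section
/- The set of matrices L ∈ ℝ^{n×n} that are nonsingular but not iteratively nonresonant has n²-dimensional Lebesgue measure zero; consequently, Lebesgue-almost every matrix L ∈ ℝ^{n×n} is nonsingular and iteratively nonresonant. -/
open MeasureTheory
open scoped BigOperators

/-- The discrete parallelepiped `P_{a,ℓ} = {x : ℤ^n | a_k ≤ x_k < a_k + ℓ_k}`. -/
noncomputable def Ppd {ι : Type*} [Fintype ι] [DecidableEq ι] (a : ι → ℤ) (l : ι → ℕ) :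
    Finset (ι → ℤ) :=
  Fintype.piFinset fun k => Finset.Ico (a k) (a k + l k)

/-- A bounded function `f : ℤ^n → ℝ` is averageable with average value `c` if
its averages over large discrete parallelepipeds converge to `c`. -/
def IsAveragedTo {ι : Type*} [Fintype ι] [DecidableEq ι]
    (f : (ι → ℤ) → ℝ) (c : ℝ) : Prop :=
  ∀ ε : ℝ, 0 < ε → ∃ N : ℕ, ∀ (a : ι → ℤ) (l : ι → ℕ), (∀ k, N ≤ l k) →
    |((Ppd a l).card : ℝ)⁻¹ * ∑ x ∈ Ppd a l, f x - c| ≤ ε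

/-- A set `A ⊆ ℤ^n` is frequency measurable with frequency `c` if its indicator
function is averageable with average value `c`. -/
def HasFrequency {ι : Type*} [Fintype ι] [DecidableEq ι]
    (A : Set (ι → ℤ)) (c : ℝ) : Prop :=
  IsAveragedTo (Set.indicator A fun _ => (1 : ℝ)) c


/-- A nonsingular matrix `L ∈ ℝ^{n×n}` is iteratively nonresonant if for every `N ≥ 1`
and every nonzero tuple `(u₁,…,u_N) ∈ (ℤ^n)^N` one has `Σ_{k=1}^N (Lᵀ)^k u_k ∉ ℤ^n`. -/
def IterativelyNonresonant {ι : Type*} [Fintype ι] [DecidableEq ι]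
    (L : Matrix ι ι ℝ) : Prop :=
  ∀ N : ℕ, 0 < N → ∀ u : Fin N → ι → ℤ, u ≠ 0 → ∀ v : ι → ℤ,
    (∑ k : Fin N, (L.transpose ^ ((k : ℕ) + 1)).mulVec fun i => (u k i : ℝ)) ≠
      fun i => (v i : ℝ)

lemma poly_null : ∀ (m : ℕ) (p : MvPolynomial (Fin m) ℝ), p ≠ 0 →
    volume {x : Fin m → ℝ | MvPolynomial.eval x p = 0} = 0 := by
  intro m
  induction m with
  | zero =>
    intro p hp
    obtain ⟨a, rfl⟩ := MvPolynomial.C_surjective (Fin 0) p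
    have ha : a ≠ 0 := fun h => hp (by simp [h])
    convert measure_empty (μ := (volume : Measure (Fin 0 → ℝ)))
    ext x
    simp [ha]
  | succ m ih =>
    intro p hp
    set q := MvPolynomial.finSuccEquiv ℝ m p with hqdef
    have hq0 : q ≠ 0 := by
      intro h
      exact hp ((map_eq_zero_iff _ (AlgEquiv.injective _)).1 (hqdef ▸ h))
    have hlead : q.leadingCoeff ≠ 0 := Polynomial.leadingCoeff_ne_zero.2 hq0
    have hB := ih _ hlead
    set e := MeasurableEquiv.piFinSuccAbove (fun _ : Fin (m + 1) => ℝ) 0 with he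
    have hmp := volume_preserving_piFinSuccAbove (fun _ : Fin (m + 1) => ℝ) 0
    set S : Set (Fin (m + 1) → ℝ) := {x | MvPolynomial.eval x p = 0} with hS
    have hSm : MeasurableSet S :=
      (isClosed_eq (MvPolynomial.continuous_eval p) continuous_const).measurableSet
    set T : Set (ℝ × (Fin m → ℝ)) := e.symm ⁻¹' S with hT
    have hTm : MeasurableSet T := e.symm.measurable hSm
    have hST : S = e ⁻¹' T := by
      rw [hT, ← Set.preimage_comp]
      simp
    have hTval : ∀ z : ℝ × (Fin m → ℝ),
        z ∈ T ↔ Polynomial.eval z.1 (q.map (MvPolynomial.eval z.2)) = 0 := by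
      intro z
      have : e.symm z = Fin.cons z.1 z.2 := by
        rw [he, MeasurableEquiv.piFinSuccAbove_symm_apply]
        ext j
        induction j using Fin.cases with
        | zero => simp [Fin.insertNthEquiv]
        | succ j => simp [Fin.insertNthEquiv, Fin.insertNth_apply_succAbove]
      simp only [hT, Set.mem_preimage, hS, Set.mem_setOf_eq, this]
      rw [MvPolynomial.eval_eq_eval_mv_eval']
    rw [hST, hmp.measure_preimage hTm.nullMeasurableSet]
    -- now volume.prod volume T = 0
    have hswap : (volume : Measure (ℝ × (Fin m → ℝ))) T
        = ((volume : Measure (Fin m → ℝ)).prod (volume : Measure ℝ)) (Prod.swap ⁻¹' T) := by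
      rw [Measure.volume_eq_prod, ← Measure.prod_swap]
      rw [Measure.map_apply measurable_swap hTm]
    rw [show (volume : Measure (ℝ × (Fin m → ℝ))) T = _ from hswap]
    rw [Measure.measure_prod_null (measurable_swap hTm)]
    have hBae : ∀ᵐ y : Fin m → ℝ, MvPolynomial.eval y q.leadingCoeff ≠ 0 := by
      rw [ae_iff]
      simpa using hB
    filter_upwards [hBae] with y hy
    have hqy : q.map (MvPolynomial.eval y) ≠ 0 := by
      intro h
      apply hy
      have := congrArg (fun r => Polynomial.coeff r q.natDegree) h
      simpa [Polynomial.coeff_map] using this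
    have hfin : {t : ℝ | Polynomial.eval t (q.map (MvPolynomial.eval y)) = 0}.Finite := by
      apply Set.Finite.subset (q.map (MvPolynomial.eval y)).roots.toFinset.finite_toSet
      intro t ht
      have hroot : (q.map (MvPolynomial.eval y)).IsRoot t := ht
      simp only [Finset.mem_coe, Multiset.mem_toFinset, Polynomial.mem_roots hqy]
      exact hroot
    have : Prod.mk y ⁻¹' (Prod.swap ⁻¹' T)
        = {t : ℝ | Polynomial.eval t (q.map (MvPolynomial.eval y)) = 0} := by
      ext t
      simp only [Set.mem_preimage, Prod.swap, Set.mem_setOf_eq]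
      exact hTval (t, y)
    simp only [Pi.zero_apply]
    rw [this]
    exact hfin.measure_zero _

lemma poly_null' {ι : Type*} [Fintype ι] (p : MvPolynomial ι ℝ) (hp : p ≠ 0) :
    volume {x : ι → ℝ | MvPolynomial.eval x p = 0} = 0 := by
  classical
  set σ := Fintype.equivFin ι with hσ
  set P := MvPolynomial.rename σ p with hP
  have hP0 : P ≠ 0 := fun h =>
    hp (MvPolynomial.rename_injective σ σ.injective (by simpa [hP] using h))
  have key := poly_null _ P hP0
  have hA : MeasurableSet {x : ι → ℝ | MvPolynomial.eval x p = 0} :=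
    (isClosed_eq (MvPolynomial.continuous_eval p) continuous_const).measurableSet
  have hmp := volume_preserving_arrowCongr' (β₁ := ℝ) (β₂ := ℝ) σ.symm
    (MeasurableEquiv.refl ℝ) (MeasurePreserving.id _)
  rw [← hmp.measure_preimage hA.nullMeasurableSet]
  rw [show (⇑(MeasurableEquiv.arrowCongr' σ.symm (MeasurableEquiv.refl ℝ))) ⁻¹'
      {x : ι → ℝ | MvPolynomial.eval x p = 0}
      = {y : Fin (Fintype.card ι) → ℝ | MvPolynomial.eval y P = 0} from ?_]
  · exact key
  · ext y
    simp only [Set.mem_preimage, Set.mem_setOf_eq, hP, MvPolynomial.eval_rename]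
    constructor <;> intro h <;> convert h using 2 <;>
      · ext i
        simp [MeasurableEquiv.arrowCongr', Equiv.arrowCongr', Equiv.arrowCongr]
        exact (MvPolynomial.eval_X _).trans (MvPolynomial.eval_X _).symm

/-- Uncurrying matrices as a measurable equivalence. -/
def uncEquiv (n : ℕ) : (Fin n → Fin n → ℝ) ≃ᵐ (Fin n × Fin n → ℝ) where
  toEquiv :=
  { toFun := fun M p => M p.1 p.2
    invFun := fun f i j => f (i, j)
    left_inv := fun _ => rfl
    right_inv := fun _ => rfl }
  measurable_toFun := measurable_pi_lambda _ fun p =>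
    (measurable_pi_apply p.2).comp (measurable_pi_apply p.1)
  measurable_invFun := measurable_pi_lambda _ fun _ =>
    measurable_pi_lambda _ fun _ => measurable_pi_apply _

lemma unc_mp (n : ℕ) : MeasurePreserving (uncEquiv n) volume volume := by
  refine ⟨(uncEquiv n).measurable, ?_⟩
  have h : ∀ s : Fin n × Fin n → Set ℝ, (∀ i, MeasurableSet (s i)) →
      (Measure.map (uncEquiv n) volume) (Set.univ.pi s) = ∏ i, volume (s i) := by
    intro s hs
    rw [Measure.map_apply (uncEquiv n).measurable (MeasurableSet.univ_pi hs)]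
    have : (uncEquiv n) ⁻¹' Set.univ.pi s
        = Set.univ.pi fun i => Set.univ.pi fun j => s (i, j) := by
      ext M
      simp only [Set.mem_preimage, Set.mem_univ_pi]
      exact ⟨fun h i j => h (i, j), fun h p => h p.1 p.2⟩
    rw [this, volume_pi_pi]
    rw [Fintype.prod_prod_type]
    exact Finset.prod_congr rfl fun i _ => volume_pi_pi _
  have := Measure.pi_eq h
  rw [MeasureTheory.volume_pi]
  exact this.symm

lemma resonant_null (n N : ℕ) (u : Fin N → Fin n → ℤ) (hu : u ≠ 0) (v : Fin n → ℤ) :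
    volume {M : Fin n → Fin n → ℝ |
      (∑ k : Fin N, ((Matrix.of M).transpose ^ ((k : ℕ) + 1)).mulVec fun i => (u k i : ℝ))
        = fun i => (v i : ℝ)} = 0 := by
  classical
  obtain ⟨k₀, hk₀⟩ := Function.ne_iff.1 hu
  obtain ⟨i₀, hi₀⟩ := Function.ne_iff.1 hk₀
  have hi₀' : (u k₀ i₀ : ℝ) ≠ 0 := by exact_mod_cast hi₀
  set Xm : Matrix (Fin n) (Fin n) (MvPolynomial (Fin n × Fin n) ℝ) :=
    Matrix.of fun i j => MvPolynomial.X (i, j) with hXm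
  set p : MvPolynomial (Fin n × Fin n) ℝ :=
    (∑ k : Fin N, (Xm.transpose ^ ((k : ℕ) + 1)).mulVec fun i => MvPolynomial.C ((u k i : ℝ))) i₀
      - MvPolynomial.C ((v i₀ : ℝ)) with hp
  have heval : ∀ M : Fin n → Fin n → ℝ,
      MvPolynomial.eval (fun pr : Fin n × Fin n => M pr.1 pr.2) p
        = (∑ k : Fin N,
            ((Matrix.of M).transpose ^ ((k : ℕ) + 1)).mulVec fun i => (u k i : ℝ)) i₀
          - (v i₀ : ℝ) := by
    intro M
    set φ : MvPolynomial (Fin n × Fin n) ℝ →+* ℝ :=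
      (MvPolynomial.eval fun pr : Fin n × Fin n => M pr.1 pr.2 : _ →+* ℝ) with hφ
    have hXmap : Xm.map φ = Matrix.of M := by
      ext i j
      simp [hXm, hφ]
    have hpow : ∀ k : ℕ, (Xm.transpose ^ k).map φ = (Matrix.of M).transpose ^ k := by
      intro k
      have h1 : (Xm.transpose ^ k).map (φ : _ → ℝ) = (Xm.transpose.map φ) ^ k := by
        rw [← RingHom.mapMatrix_apply, ← RingHom.mapMatrix_apply, map_pow]
      rw [h1, Matrix.transpose_map, hXmap]
    show φ p = _
    rw [hp, map_sub, MvPolynomial.eval_C]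
    congr 1
    rw [Finset.sum_apply, map_sum, Finset.sum_apply]
    refine Finset.sum_congr rfl fun k _ => ?_
    simp only [Matrix.mulVec, dotProduct]
    rw [map_sum]
    refine Finset.sum_congr rfl fun j _ => ?_
    rw [map_mul, MvPolynomial.eval_C]
    have := congrFun (congrFun (hpow ((k : ℕ) + 1)) i₀) j
    simp only [Matrix.map_apply] at this
    rw [this]
  have hpne : p ≠ 0 := by
    set r : Polynomial ℝ :=
      (∑ k : Fin N, Polynomial.C ((u k i₀ : ℝ)) * Polynomial.X ^ ((k : ℕ) + 1))
        - Polynomial.C ((v i₀ : ℝ)) with hr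
    have hrne : r ≠ 0 := by
      intro h
      have hco := congrArg (fun q => Polynomial.coeff q ((k₀ : ℕ) + 1)) h
      simp only [hr, Polynomial.coeff_sub, Polynomial.finset_sum_coeff,
        Polynomial.coeff_C_mul, Polynomial.coeff_X_pow, Polynomial.coeff_C,
        Polynomial.coeff_zero, Nat.succ_ne_zero, if_false, sub_zero] at hco
      rw [Finset.sum_eq_single k₀ (fun b _ hb => by
          have hne : ¬ ((k₀ : ℕ) + 1 = (b : ℕ) + 1) := by
            intro hh
            exact hb (Fin.ext (Nat.succ_injective hh)).symm
          rw [if_neg hne, mul_zero]) (by simp)] at hco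
      simp at hco
      exact hi₀ hco
    obtain ⟨t, ht⟩ : ∃ t : ℝ, Polynomial.eval t r ≠ 0 := by
      by_contra hc
      push_neg at hc
      exact hrne (Polynomial.funext fun s => by simp [hc s])
    intro hp0
    apply ht
    set M₀ : Fin n → Fin n → ℝ := fun i j => (t • (1 : Matrix (Fin n) (Fin n) ℝ)) i j with hM₀
    have hof : Matrix.of M₀ = t • (1 : Matrix (Fin n) (Fin n) ℝ) := rfl
    have h2 : MvPolynomial.eval (fun pr : Fin n × Fin n => M₀ pr.1 pr.2) p
        = Polynomial.eval t r := by
      rw [heval M₀, hof, hr]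
      simp only [Matrix.transpose_smul, Matrix.transpose_one, smul_pow, one_pow,
        Matrix.smul_mulVec, Matrix.one_mulVec, Finset.sum_apply, Pi.smul_apply,
        smul_eq_mul, Polynomial.eval_sub, Polynomial.eval_finset_sum, Polynomial.eval_mul,
        Polynomial.eval_C, Polynomial.eval_pow, Polynomial.eval_X]
      congr 1
      exact Finset.sum_congr rfl fun k _ => mul_comm _ _
    rw [hp0] at h2
    simp at h2
    exact h2.symm
  have hZm : MeasurableSet {x : Fin n × Fin n → ℝ | MvPolynomial.eval x p = 0} :=
    (isClosed_eq (MvPolynomial.continuous_eval p) continuous_const).measurableSet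
  have hsub : {M : Fin n → Fin n → ℝ |
      (∑ k : Fin N, ((Matrix.of M).transpose ^ ((k : ℕ) + 1)).mulVec fun i => (u k i : ℝ))
        = fun i => (v i : ℝ)}
      ⊆ (uncEquiv n) ⁻¹' {x : Fin n × Fin n → ℝ | MvPolynomial.eval x p = 0} := by
    intro M hM
    simp only [Set.mem_preimage, Set.mem_setOf_eq]
    rw [show ((uncEquiv n) M) = (fun pr : Fin n × Fin n => M pr.1 pr.2) from rfl, heval M]
    have := congrFun hM i₀
    rw [this]
    ring
  refine measure_mono_null hsub ?_
  rw [(unc_mp n).measure_preimage hZm.nullMeasurableSet]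
  exact poly_null' p hpne

lemma det_null (n : ℕ) : volume {M : Fin n → Fin n → ℝ | (Matrix.of M).det = 0} = 0 := by
  classical
  set Xm : Matrix (Fin n) (Fin n) (MvPolynomial (Fin n × Fin n) ℝ) :=
    Matrix.of fun i j => MvPolynomial.X (i, j) with hXm
  set p := Xm.det with hp
  have heval : ∀ M : Fin n → Fin n → ℝ,
      MvPolynomial.eval (fun pr : Fin n × Fin n => M pr.1 pr.2) p = (Matrix.of M).det := by
    intro M
    set φ : MvPolynomial (Fin n × Fin n) ℝ →+* ℝ :=
      (MvPolynomial.eval fun pr : Fin n × Fin n => M pr.1 pr.2 : _ →+* ℝ) with hφ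
    show φ p = _
    rw [hp, RingHom.map_det]
    congr 1
    ext i j
    simp [hXm, RingHom.mapMatrix_apply, hφ]
  have hpne : p ≠ 0 := by
    intro h
    have h1 := heval fun i j => (1 : Matrix (Fin n) (Fin n) ℝ) i j
    rw [h] at h1
    have h2 : (Matrix.of fun i j => (1 : Matrix (Fin n) (Fin n) ℝ) i j)
        = (1 : Matrix (Fin n) (Fin n) ℝ) := rfl
    rw [h2] at h1
    simp at h1
  have hZm : MeasurableSet {x : Fin n × Fin n → ℝ | MvPolynomial.eval x p = 0} :=
    (isClosed_eq (MvPolynomial.continuous_eval p) continuous_const).measurableSet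
  have hsub : {M : Fin n → Fin n → ℝ | (Matrix.of M).det = 0}
      ⊆ (uncEquiv n) ⁻¹' {x : Fin n × Fin n → ℝ | MvPolynomial.eval x p = 0} := by
    intro M hM
    simp only [Set.mem_preimage, Set.mem_setOf_eq]
    rw [show ((uncEquiv n) M) = (fun pr : Fin n × Fin n => M pr.1 pr.2) from rfl, heval M]
    exact hM
  refine measure_mono_null hsub ?_
  rw [(unc_mp n).measure_preimage hZm.nullMeasurableSet]
  exact poly_null' p hpne


/-- the set of matrices `L ∈ ℝ^{n×n}` that are nonsingular but not
iteratively nonresonant has Lebesgue measure zero; consequently, almost every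
`L ∈ ℝ^{n×n}` is nonsingular and iteratively nonresonant. -/
theorem stmt9 (n : ℕ) :
    volume {M : Fin n → Fin n → ℝ |
      (Matrix.of M).det ≠ 0 ∧ ¬ IterativelyNonresonant (Matrix.of M)} = 0 ∧
    ∀ᵐ M ∂(volume : Measure (Fin n → Fin n → ℝ)),
      (Matrix.of M).det ≠ 0 ∧ IterativelyNonresonant (Matrix.of M) := by
  classical
  have hbad : volume {M : Fin n → Fin n → ℝ | ¬ IterativelyNonresonant (Matrix.of M)} = 0 := by
    have hsub : {M : Fin n → Fin n → ℝ | ¬ IterativelyNonresonant (Matrix.of M)}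
        ⊆ ⋃ (N : ℕ) (u : Fin N → Fin n → ℤ) (v : Fin n → ℤ),
          {M : Fin n → Fin n → ℝ | u ≠ 0 ∧
            (∑ k : Fin N, ((Matrix.of M).transpose ^ ((k : ℕ) + 1)).mulVec
              fun i => (u k i : ℝ)) = fun i => (v i : ℝ)} := by
      intro M hM
      simp only [Set.mem_setOf_eq, IterativelyNonresonant] at hM
      push_neg at hM
      obtain ⟨N, hN, u, hu, v, hv⟩ := hM
      exact Set.mem_iUnion.2 ⟨N, Set.mem_iUnion.2 ⟨u, Set.mem_iUnion.2 ⟨v, ⟨hu, hv⟩⟩⟩⟩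
    refine measure_mono_null hsub ?_
    refine measure_iUnion_null fun N => measure_iUnion_null fun u =>
      measure_iUnion_null fun v => ?_
    by_cases hu : u = 0
    · have : {M : Fin n → Fin n → ℝ | u ≠ 0 ∧
          (∑ k : Fin N, ((Matrix.of M).transpose ^ ((k : ℕ) + 1)).mulVec
            fun i => (u k i : ℝ)) = fun i => (v i : ℝ)} = ∅ := by
        ext M
        simp [hu]
      rw [this]
      exact measure_empty
    · exact measure_mono_null (fun M hM => hM.2) (resonant_null n N u hu v)
  constructor
  · exact measure_mono_null (fun M hM => hM.2) hbad
  · rw [ae_iff]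
    refine measure_mono_null (fun M hM => ?_)
      (measure_union_null (det_null n) hbad)
    simp only [Set.mem_setOf_eq, not_and_or, not_not] at hM
    rcases hM with h | h
    · exact Or.inl h
    · exact Or.inr h
end

section
/- Let R : ℝ^n → ℤ^n be a quantizer, L ∈ ℝ^{n×n} a nonsingular matrix, and T := R ∘ L the transition operator of the quantized linear (R,L)-system. Then for every m ∈ ℕ, every set G ⊆ ℝ^m and every matrix Λ ∈ ℝ^{m×n}, the preimage of the quasiperiodic set Q_m(G,Λ) under T satisfies T⁻¹(Q_m(G,Λ)) = Q_{n+m}(({0}×G) + {(v, Λv) : v ∈ R⁻¹(0)}, [I_n; Λ]·L), where {0}×G ⊆ ℝ^{n+m}, the sum is the Minkowski sum in ℝ^{n+m}, and [I_n; Λ]·L ∈ ℝ^{(n+m)×n} is the matrix with blocks L and ΛL stacked vertically. -/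
open MeasureTheory
open scoped BigOperators

/-- A bounded set `G ⊆ ℝ^m` is Jordan measurable if its topological boundary has
Lebesgue measure zero. -/
def JordanMeasurable {ι : Type*} [Fintype ι] (G : Set (ι → ℝ)) : Prop :=
  Bornology.IsBounded G ∧ volume (frontier G) = 0

/-- A matrix `Λ ∈ ℝ^{m×n}` is nonresonant if `Λᵀu ∉ ℤ^n` for every nonzero `u ∈ ℤ^m`. -/
def Nonresonant {ι κ : Type*} [Fintype ι] [Fintype κ] (Λ : Matrix ι κ ℝ) : Prop :=
  ∀ u : ι → ℤ, u ≠ 0 → ∀ v : κ → ℤ,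
    Matrix.vecMul (fun i => (u i : ℝ)) Λ ≠ fun j => (v j : ℝ)

/-- The quasiperiodic set `Q_m(G,Λ) = {x ∈ ℤ^n : Λx ∈ G + ℤ^m}`. -/
def QSet {ι κ : Type*} [Fintype ι] [Fintype κ] (Λ : Matrix ι κ ℝ)
    (G : Set (ι → ℝ)) : Set (κ → ℤ) :=
  {x | ∃ z : ι → ℤ, ((Λ.mulVec fun k => (x k : ℝ)) - fun i => (z i : ℝ)) ∈ G}


/-- A quantizer is a map `R : ℝ^n → ℤ^n` commuting with integer translations and
whose cell `R⁻¹(0)` is Jordan measurable. -/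
def IsQuantizer {ι : Type*} [Fintype ι] (R : (ι → ℝ) → ι → ℤ) : Prop :=
  (∀ (u : ι → ℝ) (z : ι → ℤ), R (u + fun i => (z i : ℝ)) = R u + z) ∧
  JordanMeasurable {u : ι → ℝ | R u = 0}

/-- The transition operator `T = R ∘ L` of the quantized linear `(R,L)`-system. -/
def Tq {ι : Type*} [Fintype ι] (R : (ι → ℝ) → ι → ℤ) (L : Matrix ι ι ℝ) :
    (ι → ℤ) → ι → ℤ :=
  fun x => R (L.mulVec fun i => (x i : ℝ))

open scoped Pointwise

/-- the preimage of a quasiperiodic set `Q_m(G,Λ)` under the transition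
operator `T = R ∘ L` is the quasiperiodic set
`Q_{n+m}(({0}×G) + {(v,Λv) : v ∈ R⁻¹(0)}, [I_n; Λ]·L)`. -/
theorem stmt10 (n m : ℕ) (R : (Fin n → ℝ) → Fin n → ℤ) (hR : IsQuantizer R)
    (L : Matrix (Fin n) (Fin n) ℝ) (hL : L.det ≠ 0)
    (G : Set (Fin m → ℝ)) (Λ : Matrix (Fin m) (Fin n) ℝ) :
    Tq R L ⁻¹' QSet Λ G =
      QSet (Matrix.fromRows (1 : Matrix (Fin n) (Fin n) ℝ) Λ * L)
        ({w : Fin n ⊕ Fin m → ℝ |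
            (∀ i, w (Sum.inl i) = 0) ∧ (fun j => w (Sum.inr j)) ∈ G} +
         {w : Fin n ⊕ Fin m → ℝ | ∃ v : Fin n → ℝ, R v = 0 ∧
            (∀ i, w (Sum.inl i) = v i) ∧ ∀ j, w (Sum.inr j) = Λ.mulVec v j}) := by
  ext x
  simp only [Set.mem_preimage, QSet, Tq, Set.mem_setOf_eq, Set.mem_add, ← Matrix.mulVec_mulVec,
    Matrix.fromRows_mulVec, Matrix.one_mulVec]
  set y : Fin n → ℝ := L.mulVec (fun i => (x i : ℝ)) with hy
  constructor
  · rintro ⟨z, hz⟩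
    set k : Fin n → ℝ := fun i => ((R y i : ℤ) : ℝ) with hk
    set v : Fin n → ℝ := y - k with hv
    have hRv : R v = 0 := by
      have h1 : y = v + fun i => ((R y i : ℤ) : ℝ) := by
        funext i; simp [hv, hk]
      have h2 : R y = R v + R y := by
        conv_lhs => rw [h1, hR.1]
      exact add_right_cancel (h2.symm.trans (zero_add (R y)).symm)
    have hΛ : Λ.mulVec v = Λ.mulVec y - Λ.mulVec k := by
      rw [hv, Matrix.mulVec_sub]
    refine ⟨Sum.elim (R y) z,
      Sum.elim 0 (fun j => Λ.mulVec k j - z j),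
      ⟨fun i => rfl, hz⟩,
      Sum.elim v (Λ.mulVec v), ⟨v, hRv, fun i => rfl, fun j => rfl⟩, ?_⟩
    funext s
    cases s with
    | inl i => simp [hv, hk]
    | inr j => simp [hΛ]
  · rintro ⟨ζ, a, ⟨ha0, haG⟩, b, ⟨v, hRv, hbl, hbr⟩, hab⟩
    refine ⟨fun j => ζ (Sum.inr j), ?_⟩
    have hyi : y = v + fun i => ((ζ (Sum.inl i) : ℤ) : ℝ) := by
      funext i
      have := congrFun hab (Sum.inl i)
      simp [ha0, hbl] at this ⊢
      linarith
    have hRy : R y = fun i => ζ (Sum.inl i) := by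
      rw [hyi, hR.1, hRv, zero_add]
    have hkey : ((Λ.mulVec fun i => (R y i : ℝ)) - fun j => (ζ (Sum.inr j) : ℝ))
        = fun j => a (Sum.inr j) := by
      funext j
      have hab' := congrFun hab (Sum.inr j)
      simp [hbr] at hab'
      have h1 : (fun i => ((R y i : ℤ) : ℝ)) = y - v := by
        funext i; rw [hRy]; have := congrFun hyi i; simp at this ⊢; linarith
      rw [h1, Matrix.mulVec_sub]
      simp only [Pi.sub_apply]
      linarith
    exact Set.mem_of_eq_of_mem (by funext j; exact congrFun hkey j) haG
end
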